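/- Let F : C → D be a full and essentially surjective k-linear tensor functor between essentially small rigid k-linear tensor categories. Then the essential image of F* : Fun_k(D, Mod_k) → Fun_k(C, Mod_k) is a tensor ideal for Day convolution: if M is any object of Fun_k(C, Mod_k) and N is in the essential image of F*, then M ⊗_C N is in the essential image of F*. -/

import Mathlib

/-!
Statement 11: Let `F : C ⥤ D` be a full and essentially surjective `k`-linear tensor
functor between essentially small rigid `k`-linear tensor categories.  Then the essential
image of the (fully faithful) restriction functor
`F* : Fun_k(D, Mod_k) ⥤ Fun_k(C, Mod_k)` is a tensor ideal for Day convolution: if `M` is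
any `k`-linear functor `C ⥤ Mod_k` and `N` is in the essential image of `F*`, then
`M ⊗_C N` is in the essential image of `F*`.

The Day convolution is computed pointwise by the `k`-linear coend
`(M ⊗_C N)(c) = ∫^{(u,v)} C(u ⊗ v, c) ⊗ M(u) ⊗ N(v)` (a quotient of a direct sum, via the
unbundled `CoendData` below); membership of `M ⊗_C N` in the essential image of `F*` is
expressed by a family of isomorphisms `(M ⊗_C N)(c) ≅ P(F c)`, natural in `c`, for some
`k`-linear functor `P : D ⥤ Mod_k`.
-/

open CategoryTheory TensorProduct DirectSum MonoidalCategory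

universe u

variable (k : Type u) [CommRing k]

/-- Unbundled data for a `k`-linear coend `∫^{c ∈ E} H(c,c)`. -/
structure CoendData (E : Type u) [Category.{u} E] : Type (u + 1) where
  obj : E → E → ModuleCat.{u} k
  left : ∀ {c c' : E} (d : E), (c' ⟶ c) → (obj c d →ₗ[k] obj c' d)
  right : ∀ (c : E) {d d' : E}, (d ⟶ d') → (obj c d →ₗ[k] obj c d')

variable {k} {E : Type u} [Category.{u} E]

/-- The submodule of relations defining the coend. -/
noncomputable def CoendData.relations (H : CoendData k E) :
    Submodule k (⨁ c : E, (H.obj c c : Type u)) :=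
  letI := Classical.decEq E
  Submodule.span k {z | ∃ (c c' : E) (α : c' ⟶ c) (y : H.obj c c'),
    z = DirectSum.lof k E (fun c => (H.obj c c : Type u)) c' (H.left c' α y)
      - DirectSum.lof k E (fun c => (H.obj c c : Type u)) c (H.right c α y)}

/-- The `k`-linear coend `∫^{c} H(c,c)`. -/
noncomputable def CoendData.Coend (H : CoendData k E) : Type u :=
  (⨁ c : E, (H.obj c c : Type u)) ⧸ H.relations

noncomputable instance (H : CoendData k E) : AddCommGroup H.Coend :=
  inferInstanceAs (AddCommGroup ((⨁ c : E, (H.obj c c : Type u)) ⧸ H.relations))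

noncomputable instance (H : CoendData k E) : Module k H.Coend :=
  inferInstanceAs (Module k ((⨁ c : E, (H.obj c c : Type u)) ⧸ H.relations))

/-- The generator `[x]_c` of the coend. -/
noncomputable def CoendData.gen (H : CoendData k E) (c : E) (x : H.obj c c) : H.Coend :=
  letI := Classical.decEq E
  Submodule.Quotient.mk (DirectSum.lof k E (fun c => (H.obj c c : Type u)) c x)


namespace CoendData

/-- The generator map as a linear map. -/
noncomputable def genHom (H : CoendData k E) (c : E) : H.obj c c →ₗ[k] H.Coend :=
  letI := Classical.decEq E
  H.relations.mkQ.comp (DirectSum.lof k E (fun c => (H.obj c c : Type u)) c)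

@[simp] theorem genHom_apply (H : CoendData k E) (c : E) (x : H.obj c c) :
    H.genHom c x = H.gen c x := rfl

theorem gen_rel (H : CoendData k E) {c c' : E} (α : c' ⟶ c) (y : H.obj c c') :
    H.gen c' (H.left c' α y) = H.gen c (H.right c α y) := by
  letI := Classical.decEq E
  exact (Submodule.Quotient.eq _).2 (Submodule.subset_span ⟨c, c', α, y, rfl⟩)

theorem hom_ext {H : CoendData k E} {Q : Type u} [AddCommGroup Q] [Module k Q]
    {f g : H.Coend →ₗ[k] Q}
    (h : ∀ (c : E) (x : H.obj c c), f (H.gen c x) = g (H.gen c x)) : f = g := by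
  letI := Classical.decEq E
  refine Submodule.linearMap_qext _ (DirectSum.linearMap_ext _ fun c => ?_)
  ext x
  exact h c x

/-- Descend a compatible family of maps to the coend. -/
noncomputable def desc (H : CoendData k E) {Q : Type u} [AddCommGroup Q] [Module k Q]
    (φ : ∀ c : E, H.obj c c →ₗ[k] Q)
    (hφ : ∀ {c c' : E} (α : c' ⟶ c) (y : H.obj c c'),
      φ c' (H.left c' α y) = φ c (H.right c α y)) : H.Coend →ₗ[k] Q :=
  letI := Classical.decEq E
  Submodule.liftQ H.relations (DirectSum.toModule k E Q φ) (by
    have hrel : H.relations = Submodule.span k {z | ∃ (c c' : E) (α : c' ⟶ c) (y : H.obj c c'),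
        z = DirectSum.lof k E (fun c => (H.obj c c : Type u)) c' (H.left c' α y)
          - DirectSum.lof k E (fun c => (H.obj c c : Type u)) c (H.right c α y)} := rfl
    rw [hrel, Submodule.span_le]
    rintro z ⟨c, c', α, y, rfl⟩
    simp only [SetLike.mem_coe, LinearMap.mem_ker, map_sub, DirectSum.toModule_lof, hφ, sub_self])

@[simp] theorem desc_gen (H : CoendData k E) {Q : Type u} [AddCommGroup Q] [Module k Q]
    (φ : ∀ c : E, H.obj c c →ₗ[k] Q)
    (hφ : ∀ {c c' : E} (α : c' ⟶ c) (y : H.obj c c'),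
      φ c' (H.left c' α y) = φ c (H.right c α y))
    (c : E) (x : H.obj c c) : H.desc φ hφ (H.gen c x) = φ c x := by
  letI := Classical.decEq E
  show Submodule.liftQ _ _ _ (Submodule.Quotient.mk _) = _
  rw [Submodule.liftQ_apply, DirectSum.toModule_lof]

end CoendData
section Ideal

variable (k)
variable {C D : Type u} [Category.{u} C] [Category.{u} D]
  [Preadditive C] [Linear k C] [MonoidalCategory C] [SymmetricCategory C]
  [MonoidalPreadditive C] [MonoidalLinear k C] [RigidCategory C]
  [Preadditive D] [Linear k D] [MonoidalCategory D] [SymmetricCategory D]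
  [MonoidalPreadditive D] [MonoidalLinear k D] [RigidCategory D]

/-- The coend data computing the Day convolution
`(M ⊗_C N)(c) = ∫^{(u,v)} C(u ⊗ v, c) ⊗_k M(u) ⊗_k N(v)`. -/
noncomputable def dayData (M N : C ⥤ ModuleCat.{u} k) (c : C) : CoendData k (C × C) where
  obj p q := ModuleCat.of k
    (((p.1 ⊗ p.2 : C) ⟶ c) ⊗[k] ((M.obj q.1 : Type u) ⊗[k] (N.obj q.2 : Type u)))
  left q φ := TensorProduct.map (Linear.leftComp k c (φ.1 ⊗ₘ φ.2)) LinearMap.id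
  right p {q q'} ψ := TensorProduct.map LinearMap.id
    (TensorProduct.map (M.map ψ.1).hom (N.map ψ.2).hom)

/-- `P` is a `k`-linear functor (additive and `k`-linear). -/
def IsKLinearFun (P : D ⥤ ModuleCat.{u} k) : Prop :=
  ∃ h : P.Additive, @Functor.Linear k _ D (ModuleCat.{u} k) _ _ _ _ _ _ P

variable {k}

theorem dayMap_aux (M N : C ⥤ ModuleCat.{u} k) {c c' : C} (f : c ⟶ c') :
    ∀ {p p' : C × C} (α : p' ⟶ p) (y : (dayData k M N c).obj p p'),
      (((dayData k M N c').genHom p').comp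
          (TensorProduct.map (Linear.rightComp k (p'.1 ⊗ p'.2 : C) f) LinearMap.id))
        ((dayData k M N c).left p' α y) =
      (((dayData k M N c').genHom p).comp
          (TensorProduct.map (Linear.rightComp k (p.1 ⊗ p.2 : C) f) LinearMap.id))
        ((dayData k M N c).right p α y) := by
  intro p p' α y
  induction y using TensorProduct.induction_on with
  | zero => erw [map_zero, map_zero]
  | add a b ha hb => erw [map_add, map_add, ha, hb, map_add, map_add]
  | tmul g t =>
    show (dayData k M N c').gen p'
        (show (((p'.1 ⊗ p'.2 : C) ⟶ c') ⊗[k]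
            ((M.obj p'.1 : Type u) ⊗[k] (N.obj p'.2 : Type u))) from
          (((α.1 ⊗ₘ α.2) ≫ g) ≫ f) ⊗ₜ t)
      = (dayData k M N c').gen p
        (show (((p.1 ⊗ p.2 : C) ⟶ c') ⊗[k]
            ((M.obj p.1 : Type u) ⊗[k] (N.obj p.2 : Type u))) from
          (g ≫ f) ⊗ₜ (TensorProduct.map (M.map α.1).hom (N.map α.2).hom t))
    rw [Category.assoc]
    exact (dayData k M N c').gen_rel α
      (show (((p.1 ⊗ p.2 : C) ⟶ c') ⊗[k]
          ((M.obj p'.1 : Type u) ⊗[k] (N.obj p'.2 : Type u))) from (g ≫ f) ⊗ₜ t)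

/-- The map on Day coends induced by postcomposition with `f : c ⟶ c'`. -/
noncomputable def dayMap (M N : C ⥤ ModuleCat.{u} k) {c c' : C} (f : c ⟶ c') :
    (dayData k M N c).Coend →ₗ[k] (dayData k M N c').Coend :=
  (dayData k M N c).desc
    (fun p => ((dayData k M N c').genHom p).comp
      (TensorProduct.map (Linear.rightComp k (p.1 ⊗ p.2 : C) f) LinearMap.id))
    (dayMap_aux M N f)

theorem dayMap_gen (M N : C ⥤ ModuleCat.{u} k) {c c' : C} (f : c ⟶ c')
    (p : C × C) (g : (p.1 ⊗ p.2 : C) ⟶ c)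
    (t : (M.obj p.1 : Type u) ⊗[k] (N.obj p.2 : Type u)) :
    dayMap M N f ((dayData k M N c).gen p
        (show (((p.1 ⊗ p.2 : C) ⟶ c) ⊗[k]
            ((M.obj p.1 : Type u) ⊗[k] (N.obj p.2 : Type u))) from g ⊗ₜ t)) =
      (dayData k M N c').gen p
        (show (((p.1 ⊗ p.2 : C) ⟶ c') ⊗[k]
            ((M.obj p.1 : Type u) ⊗[k] (N.obj p.2 : Type u))) from (g ≫ f) ⊗ₜ t) := by
  exact (dayData k M N c).desc_gen _ (dayMap_aux M N f) p _

set_option linter.unusedSectionVars false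

theorem day_ext {M N : C ⥤ ModuleCat.{u} k} {c : C} {Q : Type u}
    [AddCommGroup Q] [Module k Q]
    {f g : (dayData k M N c).Coend →ₗ[k] Q}
    (h : ∀ (u v : C) (φ : (u ⊗ v : C) ⟶ c) (m : M.obj u) (n : N.obj v),
      f ((dayData k M N c).gen (u, v)
          (show (((u ⊗ v : C) ⟶ c) ⊗[k]
              ((M.obj u : Type u) ⊗[k] (N.obj v : Type u))) from φ ⊗ₜ (m ⊗ₜ n))) =
        g ((dayData k M N c).gen (u, v)
          (show (((u ⊗ v : C) ⟶ c) ⊗[k]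
              ((M.obj u : Type u) ⊗[k] (N.obj v : Type u))) from φ ⊗ₜ (m ⊗ₜ n)))) :
    f = g := by
  apply CoendData.hom_ext
  rintro ⟨u, v⟩ x
  simp only [← CoendData.genHom_apply]
  induction x using TensorProduct.induction_on with
  | zero => erw [map_zero, map_zero]; simp only [map_zero]
  | add a b ha hb => erw [map_add, map_add, ha, hb, map_add]
  | tmul φ t =>
    induction t using TensorProduct.induction_on with
    | zero => rw [TensorProduct.tmul_zero]; erw [map_zero, map_zero]; simp only [map_zero]
    | add a b ha hb =>
      rw [TensorProduct.tmul_add]; erw [map_add, map_add, ha, hb, map_add]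
    | tmul m n => exact h u v φ m n

theorem dayMap_id (M N : C ⥤ ModuleCat.{u} k) (c : C) :
    dayMap M N (𝟙 c) = LinearMap.id := by
  apply day_ext
  intro u v φ m n
  rw [dayMap_gen]
  simp only [Category.comp_id, LinearMap.id_apply]

theorem dayMap_comp (M N : C ⥤ ModuleCat.{u} k) {c c' c'' : C}
    (f : c ⟶ c') (f' : c' ⟶ c'') :
    dayMap M N (f ≫ f') = (dayMap M N f').comp (dayMap M N f) := by
  apply day_ext
  intro u v φ m n
  rw [dayMap_gen, LinearMap.comp_apply, dayMap_gen, dayMap_gen, Category.assoc]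

theorem dayMap_sub (M N : C ⥤ ModuleCat.{u} k) {c c' : C} (f f' : c ⟶ c') :
    dayMap M N (f - f') = dayMap M N f - dayMap M N f' := by
  apply day_ext
  intro u v φ m n
  rw [dayMap_gen, LinearMap.sub_apply, dayMap_gen, dayMap_gen,
    Preadditive.comp_sub]
  erw [TensorProduct.sub_tmul]
  exact map_sub ((dayData k M N c').genHom (u, v)) _ _

theorem dayMap_add (M N : C ⥤ ModuleCat.{u} k) {c c' : C} (f f' : c ⟶ c') :
    dayMap M N (f + f') = dayMap M N f + dayMap M N f' := by
  apply day_ext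
  intro u v φ m n
  rw [dayMap_gen, LinearMap.add_apply, dayMap_gen, dayMap_gen,
    Preadditive.comp_add]
  erw [TensorProduct.add_tmul]
  exact map_add ((dayData k M N c').genHom (u, v)) _ _

theorem dayMap_smul (M N : C ⥤ ModuleCat.{u} k) {c c' : C} (r : k) (f : c ⟶ c') :
    dayMap M N (r • f) = r • dayMap M N f := by
  apply day_ext
  intro u v φ m n
  rw [dayMap_gen, LinearMap.smul_apply, dayMap_gen,
    Linear.comp_smul]
  erw [← TensorProduct.smul_tmul']
  exact map_smul ((dayData k M N c').genHom (u, v)) _ _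

theorem dayMap_zero_of (F : C ⥤ D) [F.Additive] [F.Monoidal]
    (M N : C ⥤ ModuleCat.{u} k)
    (N₀ : D ⥤ ModuleCat.{u} k) (hN₀ : N₀.Additive) (eN : F ⋙ N₀ ≅ N)
    {c c' : C} (δ : c ⟶ c') (hδ : F.map δ = 0) : dayMap M N δ = 0 := by
  haveI := hN₀
  apply day_ext
  intro u v g m n
  rw [dayMap_gen, LinearMap.zero_apply]
  -- the transpose of `g ≫ δ` under rigidity
  set gT : v ⟶ ((ᘁu : C)) ⊗ c' := (tensorLeftHomEquiv v ((ᘁu : C)) u c') (g ≫ δ) with hgT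
  have hzig : (u ◁ gT) ≫ ((α_ u ((ᘁu : C)) c').inv ≫ ((ε_ ((ᘁu : C)) u) ▷ c') ≫ (λ_ c').hom)
      = g ≫ δ := by
    have h := (tensorLeftHomEquiv v ((ᘁu : C)) u c').symm_apply_apply (g ≫ δ)
    simpa [tensorLeftHomEquiv, Category.assoc, hgT] using h
  have h1 : F.map gT = 0 := by
    rw [hgT]
    show F.map ((λ_ v).inv ≫ ((η_ ((ᘁu : C)) u) ▷ v) ≫ (α_ ((ᘁu : C)) u v).hom
      ≫ (((ᘁu : C)) ◁ (g ≫ δ))) = 0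
    rw [Functor.map_comp, Functor.map_comp, Functor.map_comp,
      Functor.Monoidal.map_whiskerLeft]
    simp only [Functor.map_comp, hδ, Limits.comp_zero, Limits.zero_comp,
      MonoidalPreadditive.whiskerLeft_zero]
  have h2 : N.map gT = 0 := by
    have h3 := eN.hom.naturality gT
    rw [Functor.comp_map, h1, Functor.map_zero, Limits.zero_comp] at h3
    exact (cancel_epi (eN.hom.app v)).1 (by rw [Limits.comp_zero]; exact h3.symm)
  have hrel := (dayData k M N c').gen_rel (c := (u, ((ᘁu : C)) ⊗ c')) (c' := (u, v))
    (show ((u, v) : C × C) ⟶ (u, ((ᘁu : C)) ⊗ c') from (𝟙 u, gT))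
    (show (((u ⊗ (((ᘁu : C)) ⊗ c') : C) ⟶ c') ⊗[k]
        ((M.obj u : Type u) ⊗[k] (N.obj v : Type u))) from
      ((α_ u ((ᘁu : C)) c').inv ≫ ((ε_ ((ᘁu : C)) u) ▷ c') ≫ (λ_ c').hom) ⊗ₜ (m ⊗ₜ n))
  have hL : ((dayData k M N c').left (u, v)
        (show ((u, v) : C × C) ⟶ (u, ((ᘁu : C)) ⊗ c') from (𝟙 u, gT)))
        (show (((u ⊗ (((ᘁu : C)) ⊗ c') : C) ⟶ c') ⊗[k]
            ((M.obj u : Type u) ⊗[k] (N.obj v : Type u))) from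
          ((α_ u ((ᘁu : C)) c').inv ≫ ((ε_ ((ᘁu : C)) u) ▷ c') ≫ (λ_ c').hom) ⊗ₜ (m ⊗ₜ n)) =
      (show (((u ⊗ v : C) ⟶ c') ⊗[k]
          ((M.obj u : Type u) ⊗[k] (N.obj v : Type u))) from (g ≫ δ) ⊗ₜ (m ⊗ₜ n)) := by
    show ((𝟙 u ⊗ₘ gT) ≫ ((α_ u ((ᘁu : C)) c').inv ≫ ((ε_ ((ᘁu : C)) u) ▷ c') ≫ (λ_ c').hom))
        ⊗ₜ (m ⊗ₜ n) = _
    rw [MonoidalCategory.id_tensorHom, hzig]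
  have hR : ((dayData k M N c').right (u, ((ᘁu : C)) ⊗ c')
        (show ((u, v) : C × C) ⟶ (u, ((ᘁu : C)) ⊗ c') from (𝟙 u, gT)))
        (show (((u ⊗ (((ᘁu : C)) ⊗ c') : C) ⟶ c') ⊗[k]
            ((M.obj u : Type u) ⊗[k] (N.obj v : Type u))) from
          ((α_ u ((ᘁu : C)) c').inv ≫ ((ε_ ((ᘁu : C)) u) ▷ c') ≫ (λ_ c').hom) ⊗ₜ (m ⊗ₜ n)) = 0 := by
    show ((α_ u ((ᘁu : C)) c').inv ≫ ((ε_ ((ᘁu : C)) u) ▷ c') ≫ (λ_ c').hom)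
        ⊗ₜ ((M.map (𝟙 u)).hom m ⊗ₜ (N.map gT).hom n) = 0
    rw [h2, ModuleCat.hom_zero, LinearMap.zero_apply, TensorProduct.tmul_zero, TensorProduct.tmul_zero]
  rw [hL, hR] at hrel
  rw [hrel, ← CoendData.genHom_apply, map_zero]
/-- **The essential image of `F*` is a tensor ideal.**  If `F` is a full and essentially
surjective `k`-linear tensor functor between rigid `k`-linear tensor categories, `M` is
any `k`-linear functor `C ⥤ Mod_k` and `N` is in the essential image of the restriction
functor `F*` (i.e. `N ≅ F ⋙ N₀` for some `k`-linear `N₀ : D ⥤ Mod_k`), then the Day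
convolution `M ⊗_C N` is in the essential image of `F*`: there are a `k`-linear functor
`P : D ⥤ Mod_k` and isomorphisms `(M ⊗_C N)(c) ≅ P(F c)`, natural in `c`. -/
theorem essImage_restriction_tensor_ideal
    (F : C ⥤ D) [F.Additive] [F.Linear k] [F.Monoidal]
    (hFull : F.Full) (hEssSurj : F.EssSurj)
    (M N : C ⥤ ModuleCat.{u} k)
    [M.Additive] [M.Linear k] [N.Additive] [N.Linear k]
    (hN : ∃ N₀ : D ⥤ ModuleCat.{u} k, IsKLinearFun k N₀ ∧ Nonempty (F ⋙ N₀ ≅ N)) :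
    ∃ (P : D ⥤ ModuleCat.{u} k) (_ : IsKLinearFun k P)
      (e : ∀ c : C, (dayData k M N c).Coend ≃ₗ[k] P.obj (F.obj c)),
      ∀ (c c' : C) (f : c ⟶ c') (u v : C) (g : (u ⊗ v : C) ⟶ c)
        (m : M.obj u) (n : N.obj v),
        e c' ((dayData k M N c').gen (u, v)
            (show (((u ⊗ v : C) ⟶ c') ⊗[k]
                ((M.obj u : Type u) ⊗[k] (N.obj v : Type u))) from
              (g ≫ f) ⊗ₜ (m ⊗ₜ n))) =
          P.map (F.map f)
            (e c ((dayData k M N c).gen (u, v)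
              (show (((u ⊗ v : C) ⟶ c) ⊗[k]
                  ((M.obj u : Type u) ⊗[k] (N.obj v : Type u))) from
                g ⊗ₜ (m ⊗ₜ n)))) := by
  obtain ⟨N₀, ⟨hN₀add, hN₀lin⟩, ⟨eN⟩⟩ := hN
  haveI := hFull; haveI := hEssSurj; haveI := hN₀add
  have key : ∀ {a b : C} (f f' : a ⟶ b), F.map f = F.map f' →
      dayMap (k := k) M N f = dayMap M N f' := by
    intro a b f f' h
    have h0 : F.map (f - f') = 0 := by rw [Functor.map_sub, h, sub_self]
    have h1 := dayMap_zero_of F M N N₀ hN₀add eN (f - f') h0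
    rw [dayMap_sub] at h1
    exact sub_eq_zero.1 h1
  let P : D ⥤ ModuleCat.{u} k :=
    { obj := fun d => ModuleCat.of k ((dayData k M N (F.objPreimage d)).Coend)
      map := fun {d d'} φ => ModuleCat.ofHom (dayMap M N (F.preimage
        ((F.objObjPreimageIso d).hom ≫ φ ≫ (F.objObjPreimageIso d').inv)))
      map_id := fun d => by
        have h : F.map (F.preimage
            ((F.objObjPreimageIso d).hom ≫ 𝟙 d ≫ (F.objObjPreimageIso d).inv))
            = F.map (𝟙 (F.objPreimage d)) := by simp
        exact ModuleCat.hom_ext ((key _ _ h).trans (dayMap_id M N _))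
      map_comp := fun {d d' d''} φ ψ => by
        have h : F.map (F.preimage
              ((F.objObjPreimageIso d).hom ≫ (φ ≫ ψ) ≫ (F.objObjPreimageIso d'').inv))
            = F.map ((F.preimage
                ((F.objObjPreimageIso d).hom ≫ φ ≫ (F.objObjPreimageIso d').inv)) ≫
              (F.preimage
                ((F.objObjPreimageIso d').hom ≫ ψ ≫ (F.objObjPreimageIso d'').inv))) := by
          simp
        exact ModuleCat.hom_ext ((key _ _ h).trans (dayMap_comp M N _ _)) }
  have hPadd : P.Additive := by
    constructor
    intro d d' φ ψ
    have h : F.map (F.preimage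
          ((F.objObjPreimageIso d).hom ≫ (φ + ψ) ≫ (F.objObjPreimageIso d').inv))
        = F.map ((F.preimage
            ((F.objObjPreimageIso d).hom ≫ φ ≫ (F.objObjPreimageIso d').inv)) +
          (F.preimage
            ((F.objObjPreimageIso d).hom ≫ ψ ≫ (F.objObjPreimageIso d').inv))) := by
      simp [Preadditive.comp_add, Preadditive.add_comp]
    exact ModuleCat.hom_ext ((key _ _ h).trans (dayMap_add M N _ _))
  have hPlin : @Functor.Linear k _ D (ModuleCat.{u} k) _ _ _ _ _ _ P := by
    constructor
    intro d d' φ r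
    have h : F.map (F.preimage
          ((F.objObjPreimageIso d).hom ≫ (r • φ) ≫ (F.objObjPreimageIso d').inv))
        = F.map (r • F.preimage
            ((F.objObjPreimageIso d).hom ≫ φ ≫ (F.objObjPreimageIso d').inv)) := by
      simp
    exact ModuleCat.hom_ext ((key _ _ h).trans (dayMap_smul M N _ _))
  let e : ∀ c : C, (dayData k M N c).Coend ≃ₗ[k] P.obj (F.obj c) := fun c =>
    LinearEquiv.ofLinear
      (dayMap M N (F.preimage (F.objObjPreimageIso (F.obj c)).inv))
      (dayMap M N (F.preimage (F.objObjPreimageIso (F.obj c)).hom))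
      (by
        rw [← dayMap_comp]
        have h : F.map ((F.preimage (F.objObjPreimageIso (F.obj c)).hom) ≫
            (F.preimage (F.objObjPreimageIso (F.obj c)).inv))
            = F.map (𝟙 (F.objPreimage (F.obj c))) := by simp
        rw [key _ _ h, dayMap_id])
      (by
        rw [← dayMap_comp]
        have h : F.map ((F.preimage (F.objObjPreimageIso (F.obj c)).inv) ≫
            (F.preimage (F.objObjPreimageIso (F.obj c)).hom))
            = F.map (𝟙 c) := by simp
        rw [key _ _ h, dayMap_id])
  refine ⟨P, ⟨hPadd, hPlin⟩, e, ?_⟩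
  intro c c' f u v g m n
  show dayMap M N (F.preimage (F.objObjPreimageIso (F.obj c')).inv)
      ((dayData k M N c').gen (u, v)
        (show (((u ⊗ v : C) ⟶ c') ⊗[k]
            ((M.obj u : Type u) ⊗[k] (N.obj v : Type u))) from (g ≫ f) ⊗ₜ (m ⊗ₜ n)))
    = dayMap M N (F.preimage ((F.objObjPreimageIso (F.obj c)).hom ≫ F.map f ≫
        (F.objObjPreimageIso (F.obj c')).inv))
      (dayMap M N (F.preimage (F.objObjPreimageIso (F.obj c)).inv)
        ((dayData k M N c).gen (u, v)
          (show (((u ⊗ v : C) ⟶ c) ⊗[k]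
              ((M.obj u : Type u) ⊗[k] (N.obj v : Type u))) from g ⊗ₜ (m ⊗ₜ n))))
  rw [← dayMap_gen M N f (u, v) g (m ⊗ₜ n), ← LinearMap.comp_apply, ← LinearMap.comp_apply,
    ← dayMap_comp, ← dayMap_comp]
  rw [key _ _ (show F.map (f ≫ F.preimage (F.objObjPreimageIso (F.obj c')).inv)
      = F.map ((F.preimage (F.objObjPreimageIso (F.obj c)).inv) ≫
        (F.preimage ((F.objObjPreimageIso (F.obj c)).hom ≫ F.map f ≫
          (F.objObjPreimageIso (F.obj c')).inv))) by simp)]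

end Ideal
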